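/- Let H be a real Hilbert space and X ⊆ H nonempty, bounded, closed, convex. Let P : X → X be nonexpansive, i.e., ‖P(u) − P(v)‖ ≤ ‖u − v‖ for all u, v ∈ X. Then P admits at least one fixed point in X. If moreover P is a strict contraction (Lipschitz constant < 1), the fixed point is unique. -/

import Mathlib

open Filter Topology

private lemma limsup_half_aux {u : ℕ → ℝ}
    (hb : Filter.IsBoundedUnder (· ≤ ·) Filter.atTop u)
    (hc : Filter.IsCoboundedUnder (· ≤ ·) Filter.atTop u) :
    Filter.limsup (fun n => u n / 2) Filter.atTop = Filter.limsup u Filter.atTop / 2 := by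
  have hmono : Monotone (fun x : ℝ => x / 2) := fun a b h => by linarith
  have := hmono.map_limsup_of_continuousAt u
    ((continuous_id.div_const 2).continuousAt) hb hc
  simpa [Function.comp_def] using this.symm

private lemma limsup_add_le_real {u v : ℕ → ℝ}
    (h₁ : Filter.IsBoundedUnder (· ≥ ·) Filter.atTop u)
    (h₂ : Filter.IsBoundedUnder (· ≤ ·) Filter.atTop u)
    (h₃ : Filter.IsCoboundedUnder (· ≤ ·) Filter.atTop v)
    (h₄ : Filter.IsBoundedUnder (· ≤ ·) Filter.atTop v) :
    Filter.limsup (fun n => u n + v n) Filter.atTop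
      ≤ Filter.limsup u Filter.atTop + Filter.limsup v Filter.atTop :=
  limsup_add_le h₁ h₂ h₃ h₄

private lemma bddU_of_forall {u : ℕ → ℝ} (C : ℝ) (h : ∀ n, u n ≤ C) :
    Filter.IsBoundedUnder (· ≤ ·) Filter.atTop u :=
  ⟨C, Filter.eventually_map.2 (Filter.Eventually.of_forall h)⟩

private lemma bddL_of_forall {u : ℕ → ℝ} (C : ℝ) (h : ∀ n, C ≤ u n) :
    Filter.IsBoundedUnder (· ≥ ·) Filter.atTop u :=
  ⟨C, Filter.eventually_map.2 (Filter.Eventually.of_forall h)⟩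

private lemma midpoint_norm_sq {H : Type*} [NormedAddCommGroup H] [InnerProductSpace ℝ H]
    (a x y : H) :
    ‖a - ((1/2 : ℝ) • x + (1/2 : ℝ) • y)‖^2
      = ‖a - x‖^2 / 2 + ‖a - y‖^2 / 2 - ‖x - y‖^2 / 4 := by
  have h1 : a - ((1/2 : ℝ) • x + (1/2 : ℝ) • y)
      = (1/2 : ℝ) • ((a - x) + (a - y)) := by
    rw [smul_add, smul_sub, smul_sub]; module
  have h2 : x - y = (a - y) - (a - x) := by abel
  rw [h1, norm_smul, h2]
  have hp : ‖(a - x) + (a - y)‖^2 + ‖(a - y) - (a - x)‖^2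
      = 2 * ‖a - x‖^2 + 2 * ‖a - y‖^2 := by
    have := norm_add_sq_real (a - x) (a - y)
    have h' := norm_sub_sq_real (a - y) (a - x)
    have hsym : inner ℝ (a - y) (a - x) = (inner ℝ (a - x) (a - y) : ℝ) := real_inner_comm _ _
    rw [h'] at *
    nlinarith [this]
  have : ‖(1/2 : ℝ)‖ = (1/2 : ℝ) := by norm_num [Real.norm_eq_abs]
  rw [this, mul_pow]
  nlinarith [hp]

theorem browder_exists {H : Type*} [NormedAddCommGroup H] [InnerProductSpace ℝ H]
    [CompleteSpace H]
    (X : Set H) (hne : X.Nonempty) (hbdd : Bornology.IsBounded X)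
    (hcl : IsClosed X) (hconv : Convex ℝ X)
    (P : H → H) (hmaps : Set.MapsTo P X X)
    (hnonexp : ∀ u ∈ X, ∀ v ∈ X, ‖P u - P v‖ ≤ ‖u - v‖) :
    ∃ x ∈ X, P x = x := by
  obtain ⟨x0, hx0⟩ := hne
  obtain ⟨R, hR⟩ := (Metric.isBounded_iff_subset_closedBall x0).1 hbdd
  have hR' : ∀ w ∈ X, ‖w - x0‖ ≤ R := by
    intro w hw
    have := hR hw
    simpa [Metric.mem_closedBall, dist_eq_norm] using this
  have hR0 : 0 ≤ R := by simpa using hR' x0 hx0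
  have hdiam : ∀ u ∈ X, ∀ v ∈ X, ‖u - v‖ ≤ 2 * R := by
    intro u hu v hv
    calc ‖u - v‖ = ‖(u - x0) - (v - x0)‖ := by abel_nf
    _ ≤ ‖u - x0‖ + ‖v - x0‖ := norm_sub_le _ _
    _ ≤ 2 * R := by have := hR' u hu; have := hR' v hv; linarith
  -- Step 1: approximate fixed points
  have approx : ∀ ε : ℝ, 0 < ε → ∃ x ∈ X, ‖x - P x‖ ≤ ε := by
    intro ε hε
    set t : ℝ := max (1 - ε / (R + 1)) 0 with ht_def
    have hR1 : (0 : ℝ) < R + 1 := by linarith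
    have ht0 : 0 ≤ t := le_max_right _ _
    have ht1 : t < 1 := by
      apply max_lt _ one_pos
      have : 0 < ε / (R + 1) := div_pos hε hR1
      linarith
    have h1t : 1 - t ≤ ε / (R + 1) := by
      have := le_max_left (1 - ε / (R + 1)) 0
      linarith [this]
    haveI : Nonempty X := ⟨⟨x0, hx0⟩⟩
    haveI : CompleteSpace X := hcl.completeSpace_coe
    have hmem : ∀ u : X, t • P u + (1 - t) • x0 ∈ X := fun u =>
      hconv (hmaps u.2) hx0 ht0 (by linarith) (by ring)
    set g : X → X := fun u => ⟨t • P u + (1 - t) • x0, hmem u⟩ with hg_def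
    have hg : ∀ u v : X, dist (g u) (g v) ≤ t * dist u v := by
      intro u v
      have : (g u : H) - (g v : H) = t • (P u - P v) := by
        simp only [hg_def, smul_sub]; abel
      rw [Subtype.dist_eq, Subtype.dist_eq, dist_eq_norm, dist_eq_norm, this,
        norm_smul, Real.norm_eq_abs, abs_of_nonneg ht0]
      exact mul_le_mul_of_nonneg_left (hnonexp _ u.2 _ v.2) ht0
    have hcw : ContractingWith ⟨t, ht0⟩ g := by
      constructor
      · exact_mod_cast ht1
      · exact LipschitzWith.of_dist_le_mul fun u v => hg u v
    set y := hcw.fixedPoint with hy_def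
    have hyfix : g y = y := hcw.fixedPoint_isFixedPt
    have heq : t • P (y : H) + (1 - t) • x0 = (y : H) := congrArg Subtype.val hyfix
    obtain ⟨q, hqX, hq⟩ : ∃ q ∈ X, t • P q + (1 - t) • x0 = q := ⟨y, y.2, heq⟩
    clear heq hyfix hy_def
    have hdiff : q - P q = (1 - t) • (x0 - P q) := by
      nth_rewrite 1 [← hq]
      module
    refine ⟨q, hqX, ?_⟩
    rw [hdiff, norm_smul, Real.norm_eq_abs, abs_of_nonneg (by linarith : (0:ℝ) ≤ 1 - t)]
    have hb : ‖x0 - P q‖ ≤ R := by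
      rw [norm_sub_rev]; exact hR' _ (hmaps hqX)
    calc (1 - t) * ‖x0 - P q‖ ≤ (ε / (R + 1)) * R := by
          apply mul_le_mul h1t hb (norm_nonneg _)
          exact le_of_lt (div_pos hε hR1)
      _ ≤ ε := by
          rw [div_mul_eq_mul_div, div_le_iff₀ hR1]
          nlinarith
  -- Step 2: sequence of approximate fixed points
  have hpos : ∀ n : ℕ, (0:ℝ) < 1 / (n + 1) := fun n => by positivity
  choose xs hxsX hxs using fun n : ℕ => approx (1 / (n + 1)) (hpos n)
  have hinv : Tendsto (fun n : ℕ => 1 / ((n : ℝ) + 1)) atTop (𝓝 0) :=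
    tendsto_one_div_add_atTop_nhds_zero_nat
  -- the asymptotic-center functional
  set φ : H → ℝ := fun x => Filter.limsup (fun n => ‖xs n - x‖^2) atTop with hφ_def
  have hbndU : ∀ x : H, ∀ n : ℕ, ‖xs n - x‖^2 ≤ (R + ‖x0 - x‖)^2 := by
    intro x n
    have h1 : ‖xs n - x‖ ≤ R + ‖x0 - x‖ := by
      calc ‖xs n - x‖ = ‖(xs n - x0) + (x0 - x)‖ := by abel_nf
      _ ≤ ‖xs n - x0‖ + ‖x0 - x‖ := norm_add_le _ _
      _ ≤ R + ‖x0 - x‖ := by linarith [hR' (xs n) (hxsX n)]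
    nlinarith [norm_nonneg (xs n - x)]
  have hBU : ∀ x : H, Filter.IsBoundedUnder (· ≤ ·) atTop (fun n => ‖xs n - x‖^2) :=
    fun x => ⟨(R + ‖x0 - x‖)^2, Filter.eventually_map.2 (Eventually.of_forall (hbndU x))⟩
  have hBL : ∀ x : H, Filter.IsBoundedUnder (· ≥ ·) atTop (fun n => ‖xs n - x‖^2) :=
    fun x => ⟨0, Filter.eventually_map.2 (Eventually.of_forall fun n => by positivity)⟩
  have hCO : ∀ x : H, Filter.IsCoboundedUnder (· ≤ ·) atTop (fun n => ‖xs n - x‖^2) :=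
    fun x => (hBL x).isCoboundedUnder_le
  have hφ_nonneg : ∀ x : H, 0 ≤ φ x := by
    intro x
    exact le_limsup_of_frequently_le
      (Frequently.of_forall fun n => by positivity) (hBU x)
  -- key midpoint inequality
  have hkey : ∀ x y : H,
      φ ((1/2 : ℝ) • x + (1/2 : ℝ) • y) ≤ φ x / 2 + φ y / 2 - ‖x - y‖^2 / 4 := by
    intro x y
    have hpt : (fun n => ‖xs n - ((1/2 : ℝ) • x + (1/2 : ℝ) • y)‖^2)
        = fun n => (‖xs n - x‖^2 / 2 + ‖xs n - y‖^2 / 2) + (-(‖x - y‖^2 / 4)) := by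
      funext n
      have := midpoint_norm_sq (xs n) x y
      linarith [this]
    have hBU2 : Filter.IsBoundedUnder (· ≤ ·) atTop
        (fun n => ‖xs n - x‖^2 / 2 + ‖xs n - y‖^2 / 2) := by
      refine ⟨(R + ‖x0 - x‖)^2 / 2 + (R + ‖x0 - y‖)^2 / 2, Filter.eventually_map.2
        (Eventually.of_forall fun n => ?_)⟩
      have := hbndU x n; have := hbndU y n; linarith
    have hCO2 : Filter.IsCoboundedUnder (· ≤ ·) atTop
        (fun n => ‖xs n - x‖^2 / 2 + ‖xs n - y‖^2 / 2) := by
      refine Filter.IsBoundedUnder.isCoboundedUnder_le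
        ⟨0, Filter.eventually_map.2 (Eventually.of_forall fun n => by positivity)⟩
    have hsplit : Filter.limsup
        (fun n => ‖xs n - x‖^2 / 2 + ‖xs n - y‖^2 / 2) atTop ≤ φ x / 2 + φ y / 2 := by
      have hhx := limsup_half_aux (hBU x) (hCO x)
      have hhy := limsup_half_aux (hBU y) (hCO y)
      have := limsup_add_le_real (u := fun n => ‖xs n - x‖^2 / 2)
        (v := fun n => ‖xs n - y‖^2 / 2)
        (bddL_of_forall 0 fun n => by positivity)
        (bddU_of_forall ((R + ‖x0 - x‖)^2 / 2) fun n => by linarith [hbndU x n])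
        ((bddL_of_forall 0 fun n => by positivity).isCoboundedUnder_le)
        (bddU_of_forall ((R + ‖x0 - y‖)^2 / 2) fun n => by linarith [hbndU y n])
      calc Filter.limsup (fun n => ‖xs n - x‖^2 / 2 + ‖xs n - y‖^2 / 2) atTop
          ≤ Filter.limsup (fun n => ‖xs n - x‖^2 / 2) atTop
            + Filter.limsup (fun n => ‖xs n - y‖^2 / 2) atTop := this
        _ = φ x / 2 + φ y / 2 := by rw [hhx, hhy]
    calc φ ((1/2 : ℝ) • x + (1/2 : ℝ) • y)
        = Filter.limsup (fun n => (‖xs n - x‖^2 / 2 + ‖xs n - y‖^2 / 2)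
            + (-(‖x - y‖^2 / 4))) atTop := by rw [hφ_def]; simp only; rw [hpt]
      _ = Filter.limsup (fun n => ‖xs n - x‖^2 / 2 + ‖xs n - y‖^2 / 2) atTop
            + (-(‖x - y‖^2 / 4)) := limsup_add_const atTop _ _ hBU2 hCO2
      _ ≤ φ x / 2 + φ y / 2 - ‖x - y‖^2 / 4 := by linarith [hsplit]
  -- set up the minimization
  set S : Set ℝ := φ '' X with hS_def
  have hSne : S.Nonempty := ⟨φ x0, ⟨x0, hx0, rfl⟩⟩
  have hSbdd : BddBelow S := ⟨0, fun a ⟨x, _, hx⟩ => hx ▸ hφ_nonneg x⟩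
  set m : ℝ := sInf S with hm_def
  have hm_le : ∀ x ∈ X, m ≤ φ x := fun x hx => csInf_le hSbdd ⟨x, hx, rfl⟩
  -- minimizing sequence
  have hmin : ∀ k : ℕ, ∃ z ∈ X, φ z < m + 1 / (k + 1) := by
    intro k
    obtain ⟨a, ⟨z, hz, rfl⟩, ha⟩ := Real.lt_sInf_add_pos hSne (hpos k)
    exact ⟨z, hz, ha⟩
  choose zs hzsX hzs using hmin
  -- Cauchy estimate
  have hcauchy_est : ∀ j k : ℕ, ‖zs j - zs k‖^2 ≤ 2 / (j + 1) + 2 / (k + 1) := by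
    intro j k
    have hmid : (1/2 : ℝ) • zs j + (1/2 : ℝ) • zs k ∈ X :=
      hconv (hzsX j) (hzsX k) (by norm_num) (by norm_num) (by norm_num)
    have h1 := hm_le _ hmid
    have h2 := hkey (zs j) (zs k)
    have h3 := hzs j
    have h4 := hzs k
    have e1 : (2:ℝ) / ((j:ℝ) + 1) = 2 * (1 / ((j:ℝ) + 1)) := by ring
    have e2 : (2:ℝ) / ((k:ℝ) + 1) = 2 * (1 / ((k:ℝ) + 1)) := by ring
    rw [e1, e2]
    linarith
  have hzs_cauchy : CauchySeq zs := by
    apply cauchySeq_of_le_tendsto_0 (fun N : ℕ => Real.sqrt (4 / (N + 1)))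
    · intro n p N hn hp
      rw [dist_eq_norm]
      have h1 : ‖zs n - zs p‖^2 ≤ 4 / (N + 1) := by
        have := hcauchy_est n p
        have hn' : (2:ℝ) / (n + 1) ≤ 2 / (N + 1) := by
          apply div_le_div_of_nonneg_left (by norm_num) (by positivity)
          exact_mod_cast by exact_mod_cast add_le_add_left (Nat.cast_le.2 hn) 1
        have hp' : (2:ℝ) / (p + 1) ≤ 2 / (N + 1) := by
          apply div_le_div_of_nonneg_left (by norm_num) (by positivity)
          exact_mod_cast by exact_mod_cast add_le_add_left (Nat.cast_le.2 hp) 1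
        have : (2:ℝ)/(N+1) + 2/(N+1) = 4/(N+1) := by ring
        linarith
      have := Real.sqrt_le_sqrt h1
      calc ‖zs n - zs p‖ = Real.sqrt (‖zs n - zs p‖^2) := by
            rw [Real.sqrt_sq (norm_nonneg _)]
        _ ≤ Real.sqrt (4 / (N + 1)) := Real.sqrt_le_sqrt h1
    · have h4 : Tendsto (fun N : ℕ => 4 / ((N:ℝ) + 1)) atTop (𝓝 0) := by
        have := hinv.const_mul (4:ℝ)
        simpa [mul_one_div, div_eq_mul_inv] using this
      have h5 := (Real.continuous_sqrt.tendsto 0).comp h4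
      rw [Real.sqrt_zero] at h5
      exact h5
  obtain ⟨z, hz_lim⟩ := cauchySeq_tendsto_of_complete hzs_cauchy
  have hzX : z ∈ X := hcl.mem_of_tendsto hz_lim (Eventually.of_forall hzsX)
  -- continuity-type estimate: φ z ≤ φ (zs k) + error
  have hφ_cont : ∀ (y w : H), w ∈ X →
      φ y ≤ φ w + (4 * R + ‖y - w‖) * ‖y - w‖ := by
    intro y w hw
    have hpt : ∀ n, ‖xs n - y‖^2 ≤ ‖xs n - w‖^2 + (4 * R + ‖y - w‖) * ‖y - w‖ := by
      intro n
      have h1 : ‖xs n - y‖ ≤ ‖xs n - w‖ + ‖y - w‖ := by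
        calc ‖xs n - y‖ = ‖(xs n - w) - (y - w)‖ := by abel_nf
        _ ≤ ‖xs n - w‖ + ‖y - w‖ := norm_sub_le _ _
      have h2 : ‖xs n - w‖ ≤ 2 * R := hdiam _ (hxsX n) _ hw
      nlinarith [norm_nonneg (xs n - y), norm_nonneg (xs n - w), norm_nonneg (y - w)]
    calc φ y ≤ Filter.limsup (fun n => ‖xs n - w‖^2
          + (4 * R + ‖y - w‖) * ‖y - w‖) atTop := by
          exact Filter.limsup_le_limsup (Eventually.of_forall hpt) (hCO y)
            (bddU_of_forall ((R + ‖x0 - w‖)^2 + (4 * R + ‖y - w‖) * ‖y - w‖)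
              fun n => by linarith [hbndU w n])
      _ = φ w + (4 * R + ‖y - w‖) * ‖y - w‖ :=
          limsup_add_const atTop _ _ (hBU w) (hCO w)
  have hφz : φ z ≤ m := by
    have hdk : Tendsto (fun k : ℕ => ‖z - zs k‖) atTop (𝓝 0) := by
      have h1 : Tendsto (fun k : ℕ => z - zs k) atTop (𝓝 (z - z)) :=
        tendsto_const_nhds.sub hz_lim
      rw [sub_self] at h1
      simpa using h1.norm
    have hub : ∀ k : ℕ, φ z ≤ m + 1 / (k + 1) + (4 * R + ‖z - zs k‖) * ‖z - zs k‖ := by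
      intro k
      have := hφ_cont z (zs k) (hzsX k)
      linarith [hzs k]
    have hlim : Tendsto (fun k : ℕ => m + 1 / ((k:ℝ) + 1)
        + (4 * R + ‖z - zs k‖) * ‖z - zs k‖) atTop (𝓝 m) := by
      have h1 : Tendsto (fun k : ℕ => m + 1 / ((k:ℝ) + 1)) atTop (𝓝 (m + 0)) :=
        tendsto_const_nhds.add hinv
      have h2 : Tendsto (fun k : ℕ => (4 * R + ‖z - zs k‖) * ‖z - zs k‖)
          atTop (𝓝 ((4*R + 0) * 0)) :=
        (tendsto_const_nhds.add hdk).mul hdk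
      have := h1.add h2
      simpa using this
    exact ge_of_tendsto hlim (Eventually.of_forall hub)
  -- φ (P z) ≤ φ z
  have hφPz : φ (P z) ≤ φ z := by
    have hpt : ∀ n, ‖xs n - P z‖^2 ≤ ‖xs n - z‖^2 + (4 * R + 1) * (1 / (n + 1)) := by
      intro n
      have h1 : ‖xs n - P z‖ ≤ 1 / (n + 1) + ‖xs n - z‖ := by
        calc ‖xs n - P z‖ = ‖(xs n - P (xs n)) + (P (xs n) - P z)‖ := by abel_nf
        _ ≤ ‖xs n - P (xs n)‖ + ‖P (xs n) - P z‖ := norm_add_le _ _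
        _ ≤ 1 / (n + 1) + ‖xs n - z‖ := by
            have := hnonexp _ (hxsX n) _ hzX
            linarith [hxs n]
      have h2 : ‖xs n - z‖ ≤ 2 * R := hdiam _ (hxsX n) _ hzX
      have h3 : (1:ℝ) / (n + 1) ≤ 1 := by
        rw [div_le_one (by positivity)]
        have : (0:ℝ) ≤ (n:ℝ) := Nat.cast_nonneg n
        linarith
      nlinarith [norm_nonneg (xs n - P z), norm_nonneg (xs n - z), hpos n]
    have hc0 : Tendsto (fun n : ℕ => (4 * R + 1) * (1 / ((n:ℝ) + 1))) atTop (𝓝 0) := by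
      have := hinv.const_mul (4 * R + 1)
      simpa using this
    calc φ (P z) ≤ Filter.limsup (fun n : ℕ => ‖xs n - z‖^2
          + (4 * R + 1) * (1 / ((n:ℝ) + 1))) atTop :=
          Filter.limsup_le_limsup (Eventually.of_forall hpt) (hCO (P z))
            (bddU_of_forall ((R + ‖x0 - z‖)^2 + (4 * R + 1) * 1)
              (fun n => by
                have h3 : (1:ℝ) / (n + 1) ≤ 1 := by
                  rw [div_le_one (by positivity)]
                  have : (0:ℝ) ≤ (n:ℝ) := Nat.cast_nonneg n
                  linarith
                have h4 : (0:ℝ) ≤ 4 * R + 1 := by linarith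
                nlinarith [hbndU z n, hpos n]))
      _ ≤ Filter.limsup (fun n : ℕ => ‖xs n - z‖^2) atTop
            + Filter.limsup (fun n : ℕ => (4 * R + 1) * (1 / ((n:ℝ) + 1))) atTop :=
          limsup_add_le_real (hBL z) (hBU z)
            (Filter.IsBoundedUnder.isCoboundedUnder_le hc0.isBoundedUnder_ge)
            hc0.isBoundedUnder_le
      _ = φ z := by rw [hc0.limsup_eq, add_zero]
  -- conclude
  refine ⟨z, hzX, ?_⟩
  have hmid : (1/2 : ℝ) • z + (1/2 : ℝ) • (P z) ∈ X :=
    hconv hzX (hmaps hzX) (by norm_num) (by norm_num) (by norm_num)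
  have h1 := hm_le _ hmid
  have h2 := hkey z (P z)
  have h3 : ‖z - P z‖^2 ≤ 0 := by nlinarith
  have h4 : ‖z - P z‖ = 0 := by nlinarith [norm_nonneg (z - P z), sq_nonneg ‖z - P z‖]
  have := norm_eq_zero.1 h4
  have := sub_eq_zero.1 this
  exact this.symm

/-- Browder's fixed point theorem: a nonexpansive self-map of a nonempty bounded
closed convex subset of a Hilbert space has a fixed point; a strict contraction
has a unique fixed point. -/
theorem stmt_13 {H : Type*} [NormedAddCommGroup H] [InnerProductSpace ℝ H] [CompleteSpace H]
    (X : Set H) (hne : X.Nonempty) (hbdd : Bornology.IsBounded X)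
    (hcl : IsClosed X) (hconv : Convex ℝ X)
    (P : H → H) (hmaps : Set.MapsTo P X X)
    (hnonexp : ∀ u ∈ X, ∀ v ∈ X, ‖P u - P v‖ ≤ ‖u - v‖) :
    (∃ x ∈ X, P x = x) ∧
    ∀ c : ℝ, c < 1 → (∀ u ∈ X, ∀ v ∈ X, ‖P u - P v‖ ≤ c * ‖u - v‖) →
      ∃! x : H, x ∈ X ∧ P x = x := by
  have hex := browder_exists X hne hbdd hcl hconv P hmaps hnonexp
  refine ⟨hex, fun c hc hcontr => ?_⟩
  obtain ⟨x, hxX, hxfix⟩ := hex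
  refine ⟨x, ⟨hxX, hxfix⟩, fun y ⟨hyX, hyfix⟩ => ?_⟩
  by_contra hne'
  have h1 : ‖P y - P x‖ ≤ c * ‖y - x‖ := hcontr y hyX x hxX
  rw [hyfix, hxfix] at h1
  have h2 : 0 < ‖y - x‖ := norm_pos_iff.2 (sub_ne_zero.2 hne')
  nlinarith
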